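/- For every set A, the countable words over A satisfy the word-algebra axioms up to isomorphism: the nonempty countable words over A, equipped with concatenation, ω-power, ω*-power and η-shuffle, satisfy axioms (A1)–(A4) of a ⊕-algebra (with equality of words meaning isomorphism), and the countable words over A, additionally equipped with the empty word ε as distinguished element, also satisfy axiom (A5); that is, (A^⊕, ·, ω, ω*, η) is a ⊕-algebra and (A^◦, ε, ·, ω, ω*, η) is a ◦-algebra. -/

import Mathlib

/-- A countable word over the alphabet `A`: a countable linearly ordered domain
together with a labelling of its positions by letters of `A`.
Words are compared up to isomorphism via `CWord.Iso`. -/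
structure CWord (A : Type) : Type 1 where
  carrier : Type
  ord : LinearOrder carrier
  cnt : Countable carrier
  label : carrier → A

attribute [instance] CWord.ord CWord.cnt

namespace CWord

variable {A : Type}

/-- Isomorphism of words: an order-preserving bijection of the domains
commuting with the labellings. -/
def Iso (u v : CWord A) : Prop :=
  ∃ e : u.carrier ≃o v.carrier, ∀ x, v.label (e x) = u.label x

/-- The word with domain `ι` and labelling `f`. -/
def ofFun {ι : Type} [LinearOrder ι] [Countable ι] (f : ι → A) : CWord A :=
  ⟨ι, inferInstance, inferInstance, f⟩

/-- The one-letter word. -/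
def single (a : A) : CWord A := ofFun (fun _ : Fin 1 => a)

/-- The empty word `ε`. -/
def epsilon : CWord A := ofFun (fun x : Fin 0 => (x.elim0 : A))

/-- The generalized product `∏_{i ∈ ι} u i`: the word whose domain is the
lexicographic sum of the domains of the `u i`, with the inherited labels. -/
def prod {ι : Type} [LinearOrder ι] [Countable ι] (u : ι → CWord A) : CWord A :=
  ⟨Lex ((i : ι) × (u i).carrier), inferInstance,
    inferInstanceAs (Countable ((i : ι) × (u i).carrier)),
    fun x => (u (ofLex x).1).label (ofLex x).2⟩

/-- Concatenation of two words. -/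
def concat (u v : CWord A) : CWord A := prod (fun b : Bool => cond b v u)

/-- The ω-power of a word. -/
def omegaPow (u : CWord A) : CWord A := prod (fun _ : ℕ => u)

instance : Countable ℕᵒᵈ := inferInstanceAs (Countable ℕ)

/-- The ω*-power of a word. -/
def omegaStarPow (u : CWord A) : CWord A := prod (fun _ : ℕᵒᵈ => u)

/-- The `(n+1)`-st power of a word. -/
def nPowSucc (u : CWord A) (n : ℕ) : CWord A := prod (fun _ : Fin (n + 1) => u)

/-- `w` is an η-shuffle of the set of letters `P`: its domain has order
type η and every letter of `P` (and no other letter) occurs on a dense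
set of positions. -/
def IsEtaWord {S : Type} (P : Set S) (w : CWord S) : Prop :=
  Nonempty w.carrier ∧ DenselyOrdered w.carrier ∧ NoMinOrder w.carrier ∧
    NoMaxOrder w.carrier ∧ (∀ x, w.label x ∈ P) ∧
    ∀ a ∈ P, ∀ x y : w.carrier, x < y → ∃ z, x < z ∧ z < y ∧ w.label z = a

/-- `π` is a generalized product on the nonempty countable words over `S`,
i.e. `(S, π)` is a ⊕-semigroup: `π` is isomorphism-invariant, maps a
one-letter word to its letter and satisfies generalized associativity.
(`π` is modelled as a total function; only its values on nonempty words
are relevant.) -/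
def IsPlusProd {S : Type} (π : CWord S → S) : Prop :=
  (∀ u v : CWord S, Nonempty u.carrier → Iso u v → π u = π v) ∧
  (∀ a : S, π (single a) = a) ∧
  ∀ (ι : Type) [LinearOrder ι] [Countable ι] [Nonempty ι] (u : ι → CWord S),
    (∀ i, Nonempty (u i).carrier) → π (ofFun fun i => π (u i)) = π (prod u)

/-- `π` is a generalized product on all countable words over `M`,
i.e. `(M, π)` is a ◦-monoid. -/
def IsOProd {M : Type} (π : CWord M → M) : Prop :=
  (∀ u v : CWord M, Iso u v → π u = π v) ∧
  (∀ a : M, π (single a) = a) ∧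
  ∀ (ι : Type) [LinearOrder ι] [Countable ι] (u : ι → CWord M),
    π (ofFun fun i => π (u i)) = π (prod u)

------------------------------------------------------------------
-- basic Iso lemmas

theorem iso_refl (u : CWord A) : Iso u u := ⟨OrderIso.refl _, fun _ => rfl⟩

theorem iso_symm {u v : CWord A} (h : Iso u v) : Iso v u := by
  obtain ⟨e, he⟩ := h
  exact ⟨e.symm, fun x => by rw [← he (e.symm x), e.apply_symm_apply]⟩

theorem iso_trans {u v w : CWord A} (h : Iso u v) (h' : Iso v w) : Iso u w := by
  obtain ⟨e, he⟩ := h; obtain ⟨e', he'⟩ := h'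
  exact ⟨e.trans e', fun x => by simp [OrderIso.trans, he, he']⟩

theorem iso_of_isEmpty {u v : CWord A} (hu : IsEmpty u.carrier) (hv : IsEmpty v.carrier) :
    Iso u v := by
  refine ⟨⟨@Equiv.equivOfIsEmpty _ _ hu hv, ?_⟩, fun x => hu.elim x⟩
  intro a; exact hu.elim a

-- key transport lemma for products
theorem lex_lt_iff' {ι : Type} {κ : ι → Type} [LinearOrder ι] [∀ i, LinearOrder (κ i)]
    {i j : ι} {x : κ i} {y : κ j} :
    (toLex ⟨i, x⟩ : Lex ((i : ι) × κ i)) < toLex ⟨j, y⟩ ↔ i < j ∨ ∃ e : i = j, e ▸ x < y :=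
  Sigma.Lex.lt_def

theorem lex_lt_left {ι : Type} {κ : ι → Type} [LinearOrder ι] [∀ i, LinearOrder (κ i)]
    {i j : ι} (x : κ i) (y : κ j) (h : i < j) :
    (toLex ⟨i, x⟩ : Lex ((i : ι) × κ i)) < toLex ⟨j, y⟩ :=
  lex_lt_iff'.2 (Or.inl h)

theorem lex_lt_right {ι : Type} {κ : ι → Type} [LinearOrder ι] [∀ i, LinearOrder (κ i)]
    {i : ι} {x y : κ i} (h : x < y) :
    (toLex ⟨i, x⟩ : Lex ((i : ι) × κ i)) < toLex ⟨i, y⟩ :=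
  lex_lt_iff'.2 (Or.inr ⟨rfl, h⟩)

theorem prod_iso {ι ι' : Type} [LinearOrder ι] [Countable ι] [LinearOrder ι'] [Countable ι']
    {u : ι → CWord A} {v : ι' → CWord A} (e : ι ≃o ι')
    (h : ∀ i, Iso (u i) (v (e i))) : Iso (prod u) (prod v) := by
  choose g hg using h
  refine ⟨StrictMono.orderIsoOfSurjective
    (fun p : Lex ((i : ι) × (u i).carrier) => toLex ⟨e (ofLex p).1, g (ofLex p).1 (ofLex p).2⟩)
    ?_ ?_, ?_⟩
  · rintro ⟨i, x⟩ ⟨j, y⟩ hij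
    rcases lex_lt_iff'.1 hij with hij | ⟨hind, hxy⟩
    · exact lex_lt_left _ _ (e.strictMono hij)
    · subst hind
      exact lex_lt_right ((g i).strictMono hxy)
  · rintro ⟨j, y⟩
    obtain ⟨i, rfl⟩ := e.surjective j
    refine ⟨toLex ⟨i, (g i).symm y⟩, ?_⟩
    show (toLex ⟨e i, (g i) ((g i).symm y)⟩ : Lex ((j : ι') × (v j).carrier)) = toLex ⟨e i, y⟩
    rw [OrderIso.apply_symm_apply]
  · rintro ⟨i, x⟩
    exact hg i x

theorem prod_congr {ι : Type} [LinearOrder ι] [Countable ι]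
    {u v : ι → CWord A} (h : ∀ i, Iso (u i) (v i)) : Iso (prod u) (prod v) :=
  prod_iso (OrderIso.refl ι) h

instance lexSigmaCountable {ι : Type} [Countable ι] {κ : ι → Type} [∀ i, Countable (κ i)] :
    Countable (Lex ((i : ι) × κ i)) :=
  inferInstanceAs (Countable ((i : ι) × κ i))

theorem prod_prod {ι : Type} [LinearOrder ι] [Countable ι] {κ : ι → Type}
    [∀ i, LinearOrder (κ i)] [∀ i, Countable (κ i)] (v : (i : ι) → κ i → CWord A) :
    Iso (prod fun i => prod (v i))
      (prod fun p : Lex ((i : ι) × κ i) => v (ofLex p).1 (ofLex p).2) := by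
  refine ⟨StrictMono.orderIsoOfSurjective
    (fun p : Lex ((i : ι) × (prod (v i)).carrier) =>
      toLex ⟨toLex ⟨(ofLex p).1, (ofLex (ofLex p).2).1⟩, (ofLex (ofLex p).2).2⟩) ?_ ?_, ?_⟩
  · rintro ⟨i, x⟩ ⟨j, y⟩ hij
    rcases lex_lt_iff'.1 hij with hij | ⟨hind, hxy⟩
    · exact lex_lt_left _ _ (lex_lt_left _ _ hij)
    · subst hind
      obtain ⟨a, b⟩ := x; obtain ⟨c, d⟩ := y
      rcases lex_lt_iff'.1 hxy with hac | ⟨h1, h2⟩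
      · exact lex_lt_left _ _ (lex_lt_right hac)
      · subst h1
        exact lex_lt_right h2
  · rintro ⟨⟨i, a⟩, b⟩
    exact ⟨toLex ⟨i, toLex ⟨a, b⟩⟩, rfl⟩
  · rintro ⟨i, x⟩; rfl

theorem single_prod (w : CWord A) : Iso w (prod fun _ : PUnit => w) := by
  refine ⟨StrictMono.orderIsoOfSurjective
    (fun x : w.carrier => toLex ⟨PUnit.unit, x⟩) ?_ ?_, fun x => rfl⟩
  · intro x y hxy
    exact lex_lt_right hxy
  · rintro ⟨⟨⟩, x⟩; exact ⟨x, rfl⟩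

------------------------------------------------------------------
-- colored back-and-forth

variable {S : Type*}

/-- A "good family": a labelling of a nonempty unbounded linear order by elements of `P`
such that every label of `P` occurs densely. -/
def GoodFam {γ : Type} [LinearOrder γ] (P : Set S) (c : γ → S) : Prop :=
  Nonempty γ ∧ (∀ x, c x ∈ P) ∧ (∀ x : γ, ∃ y, x < y) ∧ (∀ x : γ, ∃ y, y < x) ∧
    ∀ p ∈ P, ∀ x y : γ, x < y → ∃ z, x < z ∧ z < y ∧ c z = p

namespace GoodFam

variable {γ : Type} [LinearOrder γ] {P : Set S} {c : γ → S}

theorem exists_gt_col (h : GoodFam P c) {p : S} (hp : p ∈ P) (x : γ) :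
    ∃ z, x < z ∧ c z = p := by
  obtain ⟨y, hy⟩ := h.2.2.1 x
  obtain ⟨z, hz1, _, hz3⟩ := h.2.2.2.2 p hp x y hy
  exact ⟨z, hz1, hz3⟩

theorem exists_lt_col (h : GoodFam P c) {p : S} (hp : p ∈ P) (x : γ) :
    ∃ z, z < x ∧ c z = p := by
  obtain ⟨y, hy⟩ := h.2.2.2.1 x
  obtain ⟨z, _, hz2, hz3⟩ := h.2.2.2.2 p hp y x hy
  exact ⟨z, hz2, hz3⟩

theorem exists_col (h : GoodFam P c) {p : S} (hp : p ∈ P) : ∃ z : γ, c z = p := by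
  obtain ⟨x⟩ := h.1
  obtain ⟨z, _, hz⟩ := h.exists_gt_col hp x
  exact ⟨z, hz⟩

theorem between_finsets (h : GoodFam P c) {p : S} (hp : p ∈ P) (lo hi : Finset γ)
    (lo_lt_hi : ∀ x ∈ lo, ∀ y ∈ hi, x < y) :
    ∃ m : γ, c m = p ∧ (∀ x ∈ lo, x < m) ∧ ∀ y ∈ hi, m < y := by
  by_cases nlo : lo.Nonempty
  · by_cases nhi : hi.Nonempty
    · obtain ⟨m, hm1, hm2, hm3⟩ :=
        h.2.2.2.2 p hp _ _ (lo_lt_hi _ (Finset.max'_mem _ nlo) _ (Finset.min'_mem _ nhi))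
      exact ⟨m, hm3, fun x hx => lt_of_le_of_lt (Finset.le_max' lo x hx) hm1,
        fun y hy => lt_of_lt_of_le hm2 (Finset.min'_le hi y hy)⟩
    · obtain ⟨m, hm1, hm2⟩ := h.exists_gt_col hp (Finset.max' lo nlo)
      exact ⟨m, hm2, fun x hx => lt_of_le_of_lt (Finset.le_max' lo x hx) hm1,
        fun y hy => (nhi ⟨y, hy⟩).elim⟩
  · by_cases nhi : hi.Nonempty
    · obtain ⟨m, hm1, hm2⟩ := h.exists_lt_col hp (Finset.min' hi nhi)
      exact ⟨m, hm2, fun x hx => (nlo ⟨x, hx⟩).elim,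
        fun y hy => lt_of_lt_of_le hm1 (Finset.min'_le hi y hy)⟩
    · obtain ⟨m, hm⟩ := h.exists_col hp
      exact ⟨m, hm, fun x hx => (nlo ⟨x, hx⟩).elim, fun y hy => (nhi ⟨y, hy⟩).elim⟩

end GoodFam

section BF

variable {γ₁ γ₂ : Type} [LinearOrder γ₁] [LinearOrder γ₂]

/-- Finite partial color-preserving order isomorphisms. -/
def PIsoC (c₁ : γ₁ → S) (c₂ : γ₂ → S) : Type :=
  { f : Finset (γ₁ × γ₂) //
    (∀ p ∈ f, ∀ q ∈ f, cmp (Prod.fst p) (Prod.fst q) = cmp (Prod.snd p) (Prod.snd q)) ∧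
      ∀ p ∈ f, c₂ (Prod.snd p) = c₁ (Prod.fst p) }

variable {P : Set S} {c₁ : γ₁ → S} {c₂ : γ₂ → S}

instance : Inhabited (PIsoC c₁ c₂) :=
  ⟨⟨∅, fun _p h => (Finset.notMem_empty _ h).elim, fun _p h => (Finset.notMem_empty _ h).elim⟩⟩

instance : Preorder (PIsoC c₁ c₂) := Subtype.preorder _

theorem pisoc_exists_across (h₂ : GoodFam P c₂) (hc₁ : ∀ x, c₁ x ∈ P)
    (f : PIsoC c₁ c₂) (a : γ₁) :
    ∃ b : γ₂, c₂ b = c₁ a ∧ ∀ p ∈ f.val, cmp (Prod.fst p) a = cmp (Prod.snd p) b := by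
  by_cases h : ∃ b, (a, b) ∈ f.val
  · obtain ⟨b, hb⟩ := h
    exact ⟨b, f.prop.2 _ hb, fun p hp => f.prop.1 _ hp _ hb⟩
  have key :
      ∀ x ∈ (f.val.filter fun p : γ₁ × γ₂ => p.fst < a).image Prod.snd,
        ∀ y ∈ (f.val.filter fun p : γ₁ × γ₂ => a < p.fst).image Prod.snd, x < y := by
    intro x hx y hy
    rw [Finset.mem_image] at hx hy
    rcases hx with ⟨p, hp1, rfl⟩
    rcases hy with ⟨q, hq1, rfl⟩
    rw [Finset.mem_filter] at hp1 hq1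
    rw [← lt_iff_lt_of_cmp_eq_cmp (f.prop.1 _ hp1.1 _ hq1.1)]
    exact lt_trans hp1.right hq1.right
  obtain ⟨b, hbc, hb, hb'⟩ := h₂.between_finsets (hc₁ a) _ _ key
  refine ⟨b, hbc, ?_⟩
  rintro ⟨p1, p2⟩ hp
  have hne : p1 ≠ a := fun he => h ⟨p2, he ▸ hp⟩
  rcases lt_or_gt_of_ne hne with hl | hr
  · have : p1 < a ∧ p2 < b :=
      ⟨hl, hb _ (Finset.mem_image.mpr ⟨(p1, p2), Finset.mem_filter.mpr ⟨hp, hl⟩, rfl⟩)⟩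
    rw [← cmp_eq_lt_iff, ← cmp_eq_lt_iff] at this
    exact this.1.trans this.2.symm
  · have : a < p1 ∧ b < p2 :=
      ⟨hr, hb' _ (Finset.mem_image.mpr ⟨(p1, p2), Finset.mem_filter.mpr ⟨hp, hr⟩, rfl⟩)⟩
    rw [← cmp_eq_gt_iff, ← cmp_eq_gt_iff] at this
    exact this.1.trans this.2.symm

/-- Swapping the roles. -/
def PIsoC.comm (f : PIsoC c₁ c₂) : PIsoC c₂ c₁ :=
  ⟨f.val.image (Equiv.prodComm _ _), by
    constructor
    · intro p hp q hq
      rw [Finset.mem_image] at hp hq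
      obtain ⟨p', hp', rfl⟩ := hp
      obtain ⟨q', hq', rfl⟩ := hq
      exact (f.prop.1 p' hp' q' hq').symm
    · intro p hp
      rw [Finset.mem_image] at hp
      obtain ⟨p', hp', rfl⟩ := hp
      exact (f.prop.2 p' hp').symm⟩

/-- Partial isos defined at `a : γ₁` are cofinal. -/
def pisocDefinedAtLeft (h₂ : GoodFam P c₂) (hc₁ : ∀ x, c₁ x ∈ P) (a : γ₁) :
    Order.Cofinal (PIsoC c₁ c₂) where
  carrier := {f | ∃ b : γ₂, (a, b) ∈ f.val}
  isCofinal f := by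
    obtain ⟨b, hbc, a_b⟩ := pisoc_exists_across h₂ hc₁ f a
    refine ⟨⟨insert (a, b) f.val, ?_, ?_⟩, ⟨b, Finset.mem_insert_self _ _⟩,
      Finset.subset_insert _ _⟩
    · intro p hp q hq
      rw [Finset.mem_insert] at hp hq
      rcases hp with (rfl | pf) <;> rcases hq with (rfl | qf)
      · simp only [cmp_self_eq_eq]
      · rw [cmp_eq_cmp_symm]; exact a_b _ qf
      · exact a_b _ pf
      · exact f.prop.1 _ pf _ qf
    · intro p hp
      rw [Finset.mem_insert] at hp
      rcases hp with rfl | pf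
      · exact hbc
      · exact f.prop.2 _ pf

def pisocDefinedAtRight (h₁ : GoodFam P c₁) (hc₂ : ∀ x, c₂ x ∈ P) (b : γ₂) :
    Order.Cofinal (PIsoC c₁ c₂) where
  carrier := {f | ∃ a, (a, b) ∈ f.val}
  isCofinal f := by
    rcases (pisocDefinedAtLeft h₁ hc₂ b).isCofinal f.comm with ⟨f', ⟨a, ha⟩, hl⟩
    refine ⟨f'.comm, ⟨a, ?_⟩, ?_⟩
    · change (a, b) ∈ f'.val.image _
      rwa [← Finset.mem_coe, Finset.coe_image, Equiv.image_eq_preimage_symm]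
    · change _ ⊆ f'.val.image _
      intro p hp
      rw [← Finset.mem_coe, Finset.coe_image, Equiv.image_eq_preimage_symm]
      have := hl (show ((Equiv.prodComm γ₁ γ₂) p) ∈ f.comm.val by
        change _ ∈ f.val.image _
        exact Finset.mem_image_of_mem _ hp)
      simpa using this

/-- Colored back-and-forth: two good families with the same label set are isomorphic
by a label-preserving order isomorphism. -/
theorem goodFam_orderIso [Countable γ₁] [Countable γ₂]
    (h₁ : GoodFam P c₁) (h₂ : GoodFam P c₂) :
    ∃ e : γ₁ ≃o γ₂, ∀ x, c₂ (e x) = c₁ x := by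
  classical
  cases nonempty_encodable γ₁
  cases nonempty_encodable γ₂
  let to_cofinal : γ₁ ⊕ γ₂ → Order.Cofinal (PIsoC c₁ c₂) := fun p =>
    Sum.recOn p (pisocDefinedAtLeft h₂ h₁.2.1) (pisocDefinedAtRight h₁ h₂.2.1)
  let our_ideal : Order.Ideal (PIsoC c₁ c₂) := Order.idealOfCofinals default to_cofinal
  have hF : ∀ a : γ₁, ∃ b : γ₂, ∃ f ∈ our_ideal, (a, b) ∈ f.val := by
    intro a
    obtain ⟨f, hf1, hf2⟩ := Order.cofinal_meets_idealOfCofinals default to_cofinal (Sum.inl a)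
    obtain ⟨b, hb⟩ := hf1
    exact ⟨b, f, hf2, hb⟩
  have hG : ∀ b : γ₂, ∃ a : γ₁, ∃ f ∈ our_ideal, (a, b) ∈ f.val := by
    intro b
    obtain ⟨f, hf1, hf2⟩ := Order.cofinal_meets_idealOfCofinals default to_cofinal (Sum.inr b)
    obtain ⟨a, ha⟩ := hf1
    exact ⟨a, f, hf2, ha⟩
  choose F hF1 using hF
  choose G hG1 using hG
  refine ⟨OrderIso.ofCmpEqCmp F G fun a b => ?_, fun a => ?_⟩
  · obtain ⟨f, hf, ha⟩ := hF1 a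
    obtain ⟨g, hg, hb⟩ := hG1 b
    rcases our_ideal.directed _ hf _ hg with ⟨m, _, fm, gm⟩
    exact m.prop.1 (a, _) (fm ha) (_, b) (gm hb)
  · obtain ⟨f, _, ha⟩ := hF1 a
    exact f.prop.2 _ ha

end BF

------------------------------------------------------------------
-- master lemma and sigma composition

theorem goodFam_prod_iso {γ₁ γ₂ : Type} [LinearOrder γ₁] [Countable γ₁]
    [LinearOrder γ₂] [Countable γ₂] {P : Set (CWord A)} {h₁ : γ₁ → CWord A}
    {h₂ : γ₂ → CWord A} (g₁ : GoodFam (γ := γ₁) P h₁) (g₂ : GoodFam (γ := γ₂) P h₂) :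
    Iso (prod h₁) (prod h₂) := by
  obtain ⟨e, he⟩ := goodFam_orderIso g₁ g₂
  refine prod_iso e fun i => ?_
  rw [he i]
  exact iso_refl _

theorem goodFam_sigma {ι : Type} [LinearOrder ι] [Countable ι] {κ : ι → Type}
    [∀ i, LinearOrder (κ i)] [∀ i, Countable (κ i)] {P : Set S} (H : (i : ι) → κ i → S)
    (hne : Nonempty (Lex ((i : ι) × κ i)))
    (hmem : ∀ i x, H i x ∈ P)
    (hblock : ∀ i, ∀ x y : κ i, x < y → ∀ p ∈ P, ∃ z, x < z ∧ z < y ∧ H i z = p)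
    (hcross : ∀ p ∈ P, ∀ i j : ι, i < j → ∀ x : κ i, ∀ y : κ j,
        (∃ z, x < z ∧ H i z = p) ∨ (∃ z, z < y ∧ H j z = p) ∨
        (∃ k, i < k ∧ k < j ∧ ∃ z : κ k, H k z = p))
    (hmax : ∀ i : ι, ∀ x : κ i, (∃ j, i < j ∧ Nonempty (κ j)) ∨ (∃ y, x < y))
    (hmin : ∀ i : ι, ∀ x : κ i, (∃ j, j < i ∧ Nonempty (κ j)) ∨ (∃ y, y < x)) :
    GoodFam P (fun p : Lex ((i : ι) × κ i) => H (ofLex p).1 (ofLex p).2) := by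
  refine ⟨hne, fun p => hmem _ _, ?_, ?_, ?_⟩
  · rintro ⟨i, x⟩
    rcases hmax i x with ⟨j, hj, ⟨y⟩⟩ | ⟨y, hy⟩
    · exact ⟨toLex ⟨j, y⟩, lex_lt_left _ _ hj⟩
    · exact ⟨toLex ⟨i, y⟩, lex_lt_right hy⟩
  · rintro ⟨i, x⟩
    rcases hmin i x with ⟨j, hj, ⟨y⟩⟩ | ⟨y, hy⟩
    · exact ⟨toLex ⟨j, y⟩, lex_lt_left _ _ hj⟩
    · exact ⟨toLex ⟨i, y⟩, lex_lt_right hy⟩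
  · rintro p hp ⟨i, x⟩ ⟨j, y⟩ hxy
    rcases lex_lt_iff'.1 hxy with hij | ⟨hind, hxy'⟩
    · rcases hcross p hp i j hij x y with ⟨z, hz1, hz2⟩ | ⟨z, hz1, hz2⟩ | ⟨k, hk1, hk2, z, hz⟩
      · exact ⟨toLex ⟨i, z⟩, lex_lt_right hz1, lex_lt_left _ _ hij, hz2⟩
      · exact ⟨toLex ⟨j, z⟩, lex_lt_left _ _ hij, lex_lt_right hz1, hz2⟩
      · exact ⟨toLex ⟨k, z⟩, lex_lt_left _ _ hk1, lex_lt_left _ _ hk2, hz⟩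
    · subst hind
      obtain ⟨z, hz1, hz2, hz3⟩ := hblock i x y hxy' p hp
      exact ⟨toLex ⟨i, z⟩, lex_lt_right hz1, lex_lt_right hz2, hz3⟩

------------------------------------------------------------------
-- concatenation flattening

instance condLinearOrder {κf κt : Type} [LinearOrder κf] [LinearOrder κt] (b : Bool) :
    LinearOrder (cond b κt κf) :=
  match b with
  | false => inferInstanceAs (LinearOrder κf)
  | true => inferInstanceAs (LinearOrder κt)

instance condCountable {κf κt : Type} [Countable κf] [Countable κt] (b : Bool) :
    Countable (cond b κt κf) :=
  match b with
  | false => inferInstanceAs (Countable κf)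
  | true => inferInstanceAs (Countable κt)

/-- family over `Bool` with heterogeneous index types -/
def pairFam {κf κt : Type} (uf : κf → CWord A) (ut : κt → CWord A) :
    (b : Bool) → (cond b κt κf) → CWord A := fun b =>
  match b with
  | false => uf
  | true => ut

theorem concat_flatten {κf κt : Type} [LinearOrder κf] [Countable κf]
    [LinearOrder κt] [Countable κt] {u v : CWord A} {uf : κf → CWord A} {ut : κt → CWord A}
    (hu : Iso u (prod uf)) (hv : Iso v (prod ut)) :
    Iso (concat u v)
      (prod fun p : Lex ((b : Bool) × cond b κt κf) =>
        pairFam uf ut (ofLex p).1 (ofLex p).2) := by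
  refine iso_trans (prod_congr (v := fun b => prod (pairFam uf ut b)) ?_)
    (prod_prod (pairFam uf ut))
  intro b
  cases b
  · exact hu
  · exact hv

------------------------------------------------------------------
-- lex sigma helpers

theorem lex_lt_same {ι : Type} {κ : ι → Type} [LinearOrder ι] [∀ i, LinearOrder (κ i)]
    {i : ι} {x y : κ i} (h : (toLex ⟨i, x⟩ : Lex ((i : ι) × κ i)) < toLex ⟨i, y⟩) : x < y := by
  rcases lex_lt_iff'.1 h with h' | ⟨e, h'⟩
  · exact absurd h' (lt_irrefl i)
  · exact h'

theorem lex_fst_le {ι : Type} {κ : ι → Type} [LinearOrder ι] [∀ i, LinearOrder (κ i)]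
    {i j : ι} {x : κ i} {y : κ j}
    (h : (toLex ⟨i, x⟩ : Lex ((i : ι) × κ i)) < toLex ⟨j, y⟩) : i ≤ j := by
  rcases lex_lt_iff'.1 h with h' | ⟨e, _⟩
  · exact le_of_lt h'
  · exact le_of_eq e

------------------------------------------------------------------
-- block types and their label families

/-- index type of `a · s` -/
def Ltype : Type := Lex ((b : Bool) × cond b ℚ PUnit)

/-- index type of `s · b` -/
def Rtype : Type := Lex ((b : Bool) × cond b PUnit ℚ)

/-- index type of `(a · s) · b` -/
def Btype : Type := Lex ((b : Bool) × cond b PUnit Ltype)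

instance : LinearOrder Ltype := inferInstanceAs (LinearOrder (Lex ((b : Bool) × cond b ℚ PUnit)))
instance : Countable Ltype := inferInstanceAs (Countable ((b : Bool) × cond b ℚ PUnit))
instance : LinearOrder Rtype := inferInstanceAs (LinearOrder (Lex ((b : Bool) × cond b PUnit ℚ)))
instance : Countable Rtype := inferInstanceAs (Countable ((b : Bool) × cond b PUnit ℚ))
instance : LinearOrder Btype := inferInstanceAs (LinearOrder (Lex ((b : Bool) × cond b PUnit Ltype)))
instance : Countable Btype := inferInstanceAs (Countable ((b : Bool) × cond b PUnit Ltype))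

def LFam (f : ℚ → CWord A) (a : CWord A) : Ltype → CWord A :=
  fun p => pairFam (fun _ : PUnit => a) f (ofLex p).1 (ofLex p).2

def RFam (f : ℚ → CWord A) (b : CWord A) : Rtype → CWord A :=
  fun p => pairFam f (fun _ : PUnit => b) (ofLex p).1 (ofLex p).2

def BFam2 (f : ℚ → CWord A) (a b : CWord A) : Btype → CWord A :=
  fun p => pairFam (LFam f a) (fun _ : PUnit => b) (ofLex p).1 (ofLex p).2

theorem iso_lft {f : ℚ → CWord A} {sW : CWord A} (hs : Iso sW (prod f)) (a : CWord A) :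
    Iso (concat a sW) (prod (LFam f a)) :=
  concat_flatten (single_prod a) hs

theorem iso_rgt {f : ℚ → CWord A} {sW : CWord A} (hs : Iso sW (prod f)) (b : CWord A) :
    Iso (concat sW b) (prod (RFam f b)) :=
  concat_flatten hs (single_prod b)

theorem iso_bth {f : ℚ → CWord A} {sW : CWord A} (hs : Iso sW (prod f)) (a b : CWord A) :
    Iso (concat (concat a sW) b) (prod (BFam2 f a b)) :=
  concat_flatten (iso_lft hs a) (single_prod b)

------------------------------------------------------------------
-- block-level density lemmas

section Blocks

variable {f : ℚ → CWord A} {P : Set (CWord A)} {p : CWord A}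

theorem fib_gt (hfd : ∀ p ∈ P, ∀ q r : ℚ, q < r → ∃ t, q < t ∧ t < r ∧ f t = p)
    (hp : p ∈ P) (q : ℚ) : ∃ r, q < r ∧ f r = p := by
  obtain ⟨t, ht1, _, ht3⟩ := hfd p hp q (q + 1) (by linarith)
  exact ⟨t, ht1, ht3⟩

theorem fib_lt (hfd : ∀ p ∈ P, ∀ q r : ℚ, q < r → ∃ t, q < t ∧ t < r ∧ f t = p)
    (hp : p ∈ P) (q : ℚ) : ∃ r, r < q ∧ f r = p := by
  obtain ⟨t, _, ht2, ht3⟩ := hfd p hp (q - 1) q (by linarith)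
  exact ⟨t, ht2, ht3⟩

theorem fib_any (hfd : ∀ p ∈ P, ∀ q r : ℚ, q < r → ∃ t, q < t ∧ t < r ∧ f t = p)
    (hp : p ∈ P) : ∃ r, f r = p := by
  obtain ⟨t, _, ht⟩ := fib_gt hfd hp 0
  exact ⟨t, ht⟩

variable (hfd : ∀ p ∈ P, ∀ q r : ℚ, q < r → ∃ t, q < t ∧ t < r ∧ f t = p)

include hfd in
theorem lft_hgt {a : CWord A} (hp : p ∈ P) (x : Ltype) :
    ∃ z, x < z ∧ LFam f a z = p := by
  rcases x with ⟨b, x⟩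
  cases b
  · obtain ⟨r, hr⟩ := fib_any hfd hp
    exact ⟨toLex ⟨true, r⟩, lex_lt_left _ _ (by decide), hr⟩
  · obtain ⟨r, hr1, hr2⟩ := fib_gt hfd hp x
    exact ⟨toLex ⟨true, r⟩, lex_lt_right hr1, hr2⟩

include hfd in
theorem lft_hblock {a : CWord A} (hp : p ∈ P) {x y : Ltype} (hxy : x < y) :
    ∃ z, x < z ∧ z < y ∧ LFam f a z = p := by
  rcases x with ⟨bx, x⟩
  rcases y with ⟨by', y⟩
  cases bx <;> cases by'
  · exact absurd (lex_lt_same hxy) (PUnit.not_lt x y)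
  · obtain ⟨r, hr1, hr2⟩ := fib_lt hfd hp y
    exact ⟨toLex ⟨true, r⟩, lex_lt_left _ _ (by decide), lex_lt_right hr1, hr2⟩
  · exact absurd (lex_fst_le hxy) (by decide)
  · obtain ⟨r, hr1, hr2, hr3⟩ := hfd p hp x y (lex_lt_same hxy)
    exact ⟨toLex ⟨true, r⟩, lex_lt_right hr1, lex_lt_right hr2, hr3⟩

include hfd in
theorem rgt_hlt {b : CWord A} (hp : p ∈ P) (y : Rtype) :
    ∃ z, z < y ∧ RFam f b z = p := by
  rcases y with ⟨byy, y⟩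
  cases byy
  · obtain ⟨r, hr1, hr2⟩ := fib_lt hfd hp y
    exact ⟨toLex ⟨false, r⟩, lex_lt_right hr1, hr2⟩
  · obtain ⟨r, hr⟩ := fib_any hfd hp
    exact ⟨toLex ⟨false, r⟩, lex_lt_left _ _ (by decide), hr⟩

include hfd in
theorem rgt_hblock {b : CWord A} (hp : p ∈ P) {x y : Rtype} (hxy : x < y) :
    ∃ z, x < z ∧ z < y ∧ RFam f b z = p := by
  rcases x with ⟨bx, x⟩
  rcases y with ⟨by', y⟩
  cases bx <;> cases by'
  · obtain ⟨r, hr1, hr2, hr3⟩ := hfd p hp x y (lex_lt_same hxy)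
    exact ⟨toLex ⟨false, r⟩, lex_lt_right hr1, lex_lt_right hr2, hr3⟩
  · obtain ⟨r, hr1, hr2⟩ := fib_gt hfd hp x
    exact ⟨toLex ⟨false, r⟩, lex_lt_right hr1, lex_lt_left _ _ (by decide), hr2⟩
  · exact absurd (lex_fst_le hxy) (by decide)
  · exact absurd (lex_lt_same hxy) (PUnit.not_lt x y)

include hfd in
theorem bth_ex {a b : CWord A} (hp : p ∈ P) : ∃ z : Btype, BFam2 f a b z = p := by
  obtain ⟨r, hr⟩ := fib_any hfd hp
  exact ⟨toLex ⟨false, toLex ⟨true, r⟩⟩, hr⟩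

include hfd in
theorem bth_hblock {a b : CWord A} (hp : p ∈ P) {x y : Btype} (hxy : x < y) :
    ∃ z, x < z ∧ z < y ∧ BFam2 f a b z = p := by
  rcases x with ⟨bx, x⟩
  rcases y with ⟨by', y⟩
  cases bx <;> cases by'
  · obtain ⟨z, hz1, hz2, hz3⟩ := lft_hblock hfd hp (a := a) (lex_lt_same hxy)
    exact ⟨toLex ⟨false, z⟩, lex_lt_right hz1, lex_lt_right hz2, hz3⟩
  · obtain ⟨z, hz1, hz2⟩ := lft_hgt hfd hp (a := a) x
    exact ⟨toLex ⟨false, z⟩, lex_lt_right hz1, lex_lt_left _ _ (by decide), hz2⟩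
  · exact absurd (lex_fst_le hxy) (by decide)
  · exact absurd (lex_lt_same hxy) (PUnit.not_lt x y)

theorem lft_mem {a : CWord A} (hfP : ∀ q, f q ∈ P) (ha : a ∈ P) (x : Ltype) :
    LFam f a x ∈ P := by
  rcases x with ⟨b, x⟩
  cases b
  · exact ha
  · exact hfP x

theorem rgt_mem {b : CWord A} (hfP : ∀ q, f q ∈ P) (hb : b ∈ P) (x : Rtype) :
    RFam f b x ∈ P := by
  rcases x with ⟨bb, x⟩
  cases bb
  · exact hfP x
  · exact hb

theorem bth_mem {a b : CWord A} (hfP : ∀ q, f q ∈ P) (ha : a ∈ P) (hb : b ∈ P) (x : Btype) :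
    BFam2 f a b x ∈ P := by
  rcases x with ⟨bb, x⟩
  cases bb
  · exact lft_mem hfP ha x
  · exact hb

instance : Nonempty Ltype := ⟨toLex ⟨false, PUnit.unit⟩⟩
instance : Nonempty Rtype := ⟨toLex ⟨true, PUnit.unit⟩⟩
instance : Nonempty Btype := ⟨toLex ⟨true, PUnit.unit⟩⟩

end Blocks

------------------------------------------------------------------
-- the absorption laws for shuffles

section Absorb

variable {f : ℚ → CWord A} {P : Set (CWord A)} {s : CWord A}

theorem goodFam_of_shuffle (hfP : ∀ q, f q ∈ P)
    (hfd : ∀ p ∈ P, ∀ q r : ℚ, q < r → ∃ t, q < t ∧ t < r ∧ f t = p) :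
    GoodFam P f :=
  ⟨⟨0⟩, hfP, fun q => ⟨q + 1, by linarith⟩, fun q => ⟨q - 1, by linarith⟩, hfd⟩

variable (hfP : ∀ q, f q ∈ P)
  (hfd : ∀ p ∈ P, ∀ q r : ℚ, q < r → ∃ t, q < t ∧ t < r ∧ f t = p)
  (hsf : Iso s (prod f))

include hfP hfd hsf in
theorem iso_s_ss : Iso s (concat s s) := by
  have h1 : Iso (concat s s)
      (prod fun p : Lex ((b : Bool) × cond b ℚ ℚ) =>
        pairFam f f (ofLex p).1 (ofLex p).2) := concat_flatten hsf hsf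
  have g1 : GoodFam P (fun p : Lex ((b : Bool) × cond b ℚ ℚ) =>
      pairFam f f (ofLex p).1 (ofLex p).2) := by
    refine goodFam_sigma _ ⟨toLex ⟨false, (0 : ℚ)⟩⟩ ?_ ?_ ?_ ?_ ?_
    · rintro i x; cases i
      · exact hfP x
      · exact hfP x
    · intro i x y hxy p hp
      cases i
      · exact hfd p hp x y hxy
      · exact hfd p hp x y hxy
    · intro p hp i j _ x y
      left
      cases i
      · exact fib_gt hfd hp x
      · exact fib_gt hfd hp x
    · intro i x
      right
      cases i <;>
        · change ℚ at x
          show ∃ y : ℚ, x < y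
          exact ⟨x + 1, by linarith⟩
    · intro i x
      right
      cases i <;>
        · change ℚ at x
          show ∃ y : ℚ, y < x
          exact ⟨x - 1, by linarith⟩
  exact iso_trans hsf (iso_trans (goodFam_prod_iso (goodFam_of_shuffle hfP hfd) g1)
    (iso_symm h1))

include hfP hfd hsf in
theorem iso_s_scs {c : CWord A} (hc : c ∈ P) : Iso s (concat s (concat c s)) := by
  have h1 := concat_flatten (κf := ℚ) (κt := Ltype) hsf (iso_lft hsf c)
  have g1 : GoodFam P (fun p : Lex ((b : Bool) × cond b Ltype ℚ) =>
      pairFam f (LFam f c) (ofLex p).1 (ofLex p).2) := by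
    refine goodFam_sigma _ ⟨toLex ⟨false, (0 : ℚ)⟩⟩ ?_ ?_ ?_ ?_ ?_
    · rintro i x; cases i
      · exact hfP x
      · exact lft_mem hfP hc x
    · intro i x y hxy p hp
      cases i
      · exact hfd p hp x y hxy
      · exact lft_hblock hfd hp hxy
    · intro p hp i j hij x y
      cases i
      · exact Or.inl (fib_gt hfd hp x)
      · cases j
        · exact absurd hij (by decide)
        · exact absurd hij (by decide)
    · intro i x
      cases i
      · exact Or.inl ⟨true, by decide, ⟨(Classical.arbitrary Ltype)⟩⟩
      · right
        obtain ⟨z, hz, _⟩ := lft_hgt hfd hc (a := c) x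
        exact ⟨z, hz⟩
    · intro i x
      cases i
      · right
        change ℚ at x
        show ∃ y : ℚ, y < x
        exact ⟨x - 1, by linarith⟩
      · exact Or.inl ⟨false, by decide, ⟨(0 : ℚ)⟩⟩
  exact iso_trans hsf (iso_trans (goodFam_prod_iso (goodFam_of_shuffle hfP hfd) g1)
    (iso_symm h1))

include hfP hfd hsf in
theorem iso_s_omega : Iso s (omegaPow s) := by
  have h1 : Iso (omegaPow s)
      (prod fun p : Lex ((_ : ℕ) × ℚ) => f (ofLex p).2) :=
    iso_trans (prod_congr fun _ : ℕ => hsf) (prod_prod fun _ : ℕ => f)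
  have g1 : GoodFam P (fun p : Lex ((_ : ℕ) × ℚ) => f (ofLex p).2) := by
    refine goodFam_sigma _ ⟨toLex ⟨0, (0 : ℚ)⟩⟩ (fun i x => hfP x)
      (fun i x y hxy p hp => hfd p hp x y hxy) ?_ ?_ ?_
    · intro p hp i j _ x y
      exact Or.inl (fib_gt hfd hp x)
    · intro i x
      exact Or.inl ⟨i + 1, Nat.lt_succ_self i, ⟨(0 : ℚ)⟩⟩
    · intro i x
      exact Or.inr ⟨x - 1, by linarith⟩
  exact iso_trans hsf (iso_trans (goodFam_prod_iso (goodFam_of_shuffle hfP hfd) g1)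
    (iso_symm h1))

include hfP hfd hsf in
theorem iso_s_omega_sc {c : CWord A} (hc : c ∈ P) : Iso s (omegaPow (concat s c)) := by
  have h1 : Iso (omegaPow (concat s c))
      (prod fun p : Lex ((_ : ℕ) × Rtype) => RFam f c (ofLex p).2) :=
    iso_trans (prod_congr fun _ : ℕ => iso_rgt hsf c) (prod_prod fun _ : ℕ => RFam f c)
  have g1 : GoodFam P (fun p : Lex ((_ : ℕ) × Rtype) => RFam f c (ofLex p).2) := by
    refine goodFam_sigma _ ⟨toLex ⟨0, Classical.arbitrary Rtype⟩⟩
      (fun i x => rgt_mem hfP hc x)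
      (fun i x y hxy p hp => rgt_hblock hfd hp hxy) ?_ ?_ ?_
    · intro p hp i j _ x y
      exact Or.inr (Or.inl (rgt_hlt hfd hp y))
    · intro i x
      exact Or.inl ⟨i + 1, Nat.lt_succ_self i, inferInstance⟩
    · intro i x
      right
      obtain ⟨z, hz, _⟩ := rgt_hlt hfd hc (b := c) x
      exact ⟨z, hz⟩
  exact iso_trans hsf (iso_trans (goodFam_prod_iso (goodFam_of_shuffle hfP hfd) g1)
    (iso_symm h1))

include hfP hfd hsf in
theorem iso_s_omegaStar : Iso s (omegaStarPow s) := by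
  have h1 : Iso (omegaStarPow s)
      (prod fun p : Lex ((_ : ℕᵒᵈ) × ℚ) => f (ofLex p).2) :=
    iso_trans (prod_congr fun _ : ℕᵒᵈ => hsf) (prod_prod fun _ : ℕᵒᵈ => f)
  have g1 : GoodFam P (fun p : Lex ((_ : ℕᵒᵈ) × ℚ) => f (ofLex p).2) := by
    refine goodFam_sigma _ ⟨toLex ⟨OrderDual.toDual 0, (0 : ℚ)⟩⟩ (fun i x => hfP x)
      (fun i x y hxy p hp => hfd p hp x y hxy) ?_ ?_ ?_
    · intro p hp i j _ x y
      exact Or.inl (fib_gt hfd hp x)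
    · intro i x
      exact Or.inr ⟨x + 1, by linarith⟩
    · intro i x
      refine Or.inl ⟨OrderDual.toDual (OrderDual.ofDual i + 1), ?_, ⟨(0 : ℚ)⟩⟩
      exact Nat.lt_succ_self _
  exact iso_trans hsf (iso_trans (goodFam_prod_iso (goodFam_of_shuffle hfP hfd) g1)
    (iso_symm h1))

include hfP hfd hsf in
theorem iso_s_omegaStar_cs {c : CWord A} (hc : c ∈ P) :
    Iso s (omegaStarPow (concat c s)) := by
  have h1 : Iso (omegaStarPow (concat c s))
      (prod fun p : Lex ((_ : ℕᵒᵈ) × Ltype) => LFam f c (ofLex p).2) :=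
    iso_trans (prod_congr fun _ : ℕᵒᵈ => iso_lft hsf c) (prod_prod fun _ : ℕᵒᵈ => LFam f c)
  have g1 : GoodFam P (fun p : Lex ((_ : ℕᵒᵈ) × Ltype) => LFam f c (ofLex p).2) := by
    refine goodFam_sigma _ ⟨toLex ⟨OrderDual.toDual 0, Classical.arbitrary Ltype⟩⟩
      (fun i x => lft_mem hfP hc x)
      (fun i x y hxy p hp => lft_hblock hfd hp hxy) ?_ ?_ ?_
    · intro p hp i j _ x y
      exact Or.inl (lft_hgt hfd hp x)
    · intro i x
      right
      obtain ⟨z, hz, _⟩ := lft_hgt hfd hc (a := c) x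
      exact ⟨z, hz⟩
    · intro i x
      refine Or.inl ⟨OrderDual.toDual (OrderDual.ofDual i + 1), ?_, inferInstance⟩
      exact Nat.lt_succ_self _
  exact iso_trans hsf (iso_trans (goodFam_prod_iso (goodFam_of_shuffle hfP hfd) g1)
    (iso_symm h1))

end Absorb

------------------------------------------------------------------
-- shuffle uniqueness

/-- block tags -/
inductive BTag | pt | emp | mid | lft | rgt | bth

/-- block index types -/
def BT : BTag → Type
  | .pt => PUnit
  | .emp => Fin 0
  | .mid => ℚ
  | .lft => Ltype
  | .rgt => Rtype
  | .bth => Btype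

instance BT.linearOrder : ∀ t, LinearOrder (BT t)
  | .pt => inferInstanceAs (LinearOrder PUnit)
  | .emp => inferInstanceAs (LinearOrder (Fin 0))
  | .mid => inferInstanceAs (LinearOrder ℚ)
  | .lft => inferInstanceAs (LinearOrder Ltype)
  | .rgt => inferInstanceAs (LinearOrder Rtype)
  | .bth => inferInstanceAs (LinearOrder Btype)

instance BT.countable : ∀ t, Countable (BT t)
  | .pt => inferInstanceAs (Countable PUnit)
  | .emp => inferInstanceAs (Countable (Fin 0))
  | .mid => inferInstanceAs (Countable ℚ)
  | .lft => inferInstanceAs (Countable Ltype)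
  | .rgt => inferInstanceAs (Countable Rtype)
  | .bth => inferInstanceAs (Countable Btype)

/-- block labellings -/
def BLab (f : ℚ → CWord A) (a b gq : CWord A) : (t : BTag) → BT t → CWord A
  | .pt => fun _ => gq
  | .emp => Fin.elim0
  | .mid => f
  | .lft => LFam f a
  | .rgt => RFam f b
  | .bth => BFam2 f a b

end CWord
/-- `w` is an η-shuffle of the set of words `P`: `w` is isomorphic to
`∏_{q ∈ ℚ} f q` for some choice function `f : ℚ → P` all of whose fibers over
`P` are dense in `ℚ`. -/
def IsShuffleOfWords {A : Type} (P : Set (CWord A)) (w : CWord A) : Prop :=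
  ∃ f : ℚ → CWord A, (∀ q, f q ∈ P) ∧
    (∀ u ∈ P, ∀ q r : ℚ, q < r → ∃ s : ℚ, q < s ∧ s < r ∧ f s = u) ∧
    CWord.Iso w (CWord.prod f)

namespace CWord

variable {A : Type}

section Uniq

variable {f : ℚ → CWord A} {P : Set (CWord A)} {s : CWord A}
  (hfP : ∀ q, f q ∈ P)
  (hfd : ∀ p ∈ P, ∀ q r : ℚ, q < r → ∃ t, q < t ∧ t < r ∧ f t = p)
  (hsf : Iso s (prod f))

include hfP hfd hsf in
theorem iso_shuffle_union {P' P'' : Set (CWord A)} (hPne : P.Nonempty)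
    (hP' : P' ⊆ P) (hP''ne : P''.Nonempty)
    (hP''sub : P'' ⊆ {x | x = s ∨ (∃ a ∈ P, x = concat a s) ∨ (∃ b ∈ P, x = concat s b) ∨
        (∃ a ∈ P, ∃ b ∈ P, x = concat (concat a s) b)})
    {t : CWord A} (ht : IsShuffleOfWords (P' ∪ P'') t) : Iso s t := by
  obtain ⟨p₀, hp₀⟩ := hPne
  obtain ⟨e₀, he₀⟩ := hP''ne
  obtain ⟨g, hgmem, hgd, htg⟩ := ht
  have key : ∀ q : ℚ, ∃ (tg : BTag) (a b : CWord A),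
      Iso (g q) (prod (BLab f a b (g q) tg)) ∧
      (∀ x, BLab f a b (g q) tg x ∈ P) ∧
      (∀ x y : BT tg, x < y → ∀ p ∈ P, ∃ z, x < z ∧ z < y ∧ BLab f a b (g q) tg z = p) ∧
      (g q ∈ P'' → ∀ p ∈ P, ∃ z : BT tg, BLab f a b (g q) tg z = p) := by
    intro q
    by_cases hq'' : g q ∈ P''
    · rcases hP''sub hq'' with heq | ⟨a, ha, heq⟩ | ⟨b, hb, heq⟩ | ⟨a, ha, b, hb, heq⟩
      · exact ⟨.mid, s, s, by rw [heq]; exact hsf, fun x => hfP x,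
          fun x y hxy p hp => hfd p hp x y hxy, fun _ p hp => fib_any hfd hp⟩
      · refine ⟨.lft, a, a, by rw [heq]; exact iso_lft hsf a, lft_mem hfP ha,
          fun x y hxy p hp => lft_hblock hfd hp hxy, fun _ p hp => ?_⟩
        obtain ⟨z, _, hz⟩ := lft_hgt hfd hp (a := a) (Classical.arbitrary Ltype)
        exact ⟨z, hz⟩
      · refine ⟨.rgt, b, b, by rw [heq]; exact iso_rgt hsf b, rgt_mem hfP hb,
          fun x y hxy p hp => rgt_hblock hfd hp hxy, fun _ p hp => ?_⟩
        obtain ⟨z, _, hz⟩ := rgt_hlt hfd hp (b := b) (Classical.arbitrary Rtype)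
        exact ⟨z, hz⟩
      · exact ⟨.bth, a, b, by rw [heq]; exact iso_bth hsf a b, bth_mem hfP ha hb,
          fun x y hxy p hp => bth_hblock hfd hp hxy, fun _ p hp => bth_ex hfd hp⟩
    · have hq' : g q ∈ P' := (hgmem q).resolve_right hq''
      exact ⟨.pt, g q, g q, single_prod (g q), fun _ => hP' hq',
        fun x y hxy => absurd hxy (PUnit.not_lt x y), fun h => absurd h hq''⟩
  choose tg wa wb hiso hmem hblock hex using key
  have hGt : GoodFam P (fun p : Lex ((q : ℚ) × BT (tg q)) =>
      BLab f (wa (ofLex p).1) (wb (ofLex p).1) (g (ofLex p).1) (tg (ofLex p).1)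
        (ofLex p).2) := by
    refine goodFam_sigma (κ := fun q => BT (tg q)) _ ?_ (fun i x => hmem i x)
      (fun i x y h p hp => hblock i x y h p hp) ?_ ?_ ?_
    · obtain ⟨k, _, _, hk⟩ := hgd e₀ (Or.inr he₀) 0 1 (by norm_num)
      obtain ⟨z, _⟩ := hex k (by rw [hk]; exact he₀) p₀ hp₀
      exact ⟨toLex ⟨k, z⟩⟩
    · intro p hp i j hij x y
      right; right
      obtain ⟨k, hk1, hk2, hk3⟩ := hgd e₀ (Or.inr he₀) i j hij
      obtain ⟨z, hz⟩ := hex k (by rw [hk3]; exact he₀) p hp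
      exact ⟨k, hk1, hk2, z, hz⟩
    · intro i x
      left
      obtain ⟨k, hk1, _, hk3⟩ := hgd e₀ (Or.inr he₀) i (i + 1) (by linarith)
      obtain ⟨z, _⟩ := hex k (by rw [hk3]; exact he₀) p₀ hp₀
      exact ⟨k, hk1, ⟨z⟩⟩
    · intro i x
      left
      obtain ⟨k, _, hk2, hk3⟩ := hgd e₀ (Or.inr he₀) (i - 1) i (by linarith)
      obtain ⟨z, _⟩ := hex k (by rw [hk3]; exact he₀) p₀ hp₀
      exact ⟨k, hk2, ⟨z⟩⟩
  have h2 : Iso t (prod fun p : Lex ((q : ℚ) × BT (tg q)) =>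
      BLab f (wa (ofLex p).1) (wb (ofLex p).1) (g (ofLex p).1) (tg (ofLex p).1)
        (ofLex p).2) :=
    iso_trans htg (iso_trans (prod_congr fun q => hiso q)
      (prod_prod fun q => BLab f (wa q) (wb q) (g q) (tg q)))
  exact iso_trans hsf (iso_trans (goodFam_prod_iso (goodFam_of_shuffle hfP hfd) hGt)
    (iso_symm h2))

include hfP hfd hsf in
theorem iso_shuffle_eps (hPne : P.Nonempty) {t : CWord A}
    (ht : IsShuffleOfWords (P ∪ {epsilon}) t) : Iso s t := by
  obtain ⟨p₀, hp₀⟩ := hPne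
  obtain ⟨g, hgmem, hgd, htg⟩ := ht
  have key : ∀ q : ℚ, ∃ (tg : BTag),
      Iso (g q) (prod (BLab f (g q) (g q) (g q) tg)) ∧
      (∀ x, BLab f (g q) (g q) (g q) tg x ∈ P) ∧
      (∀ x y : BT tg, x < y → ∀ p ∈ P, ∃ z, x < z ∧ z < y ∧
        BLab f (g q) (g q) (g q) tg z = p) ∧
      (g q ∈ P → ∃ z : BT tg, BLab f (g q) (g q) (g q) tg z = g q) := by
    intro q
    by_cases hq : g q ∈ P
    · exact ⟨.pt, single_prod (g q), fun _ => hq,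
        fun x y hxy => absurd hxy (PUnit.not_lt x y), fun _ => ⟨PUnit.unit, rfl⟩⟩
    · have heq : g q = epsilon := (hgmem q).resolve_left hq
      refine ⟨.emp, ?_, fun x => x.elim0, fun x => x.elim0, fun h => absurd h hq⟩
      refine iso_of_isEmpty ?_ ⟨fun pp => Fin.elim0 (ofLex pp).1⟩
      rw [heq]
      exact inferInstanceAs (IsEmpty (Fin 0))
  choose tg hiso hmem hblock hex using key
  have hGt : GoodFam P (fun p : Lex ((q : ℚ) × BT (tg q)) =>
      BLab f (g (ofLex p).1) (g (ofLex p).1) (g (ofLex p).1) (tg (ofLex p).1)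
        (ofLex p).2) := by
    refine goodFam_sigma (κ := fun q => BT (tg q)) _ ?_ (fun i x => hmem i x)
      (fun i x y h p hp => hblock i x y h p hp) ?_ ?_ ?_
    · obtain ⟨k, _, _, hk⟩ := hgd p₀ (Or.inl hp₀) 0 1 (by norm_num)
      obtain ⟨z, _⟩ := hex k (by rw [hk]; exact hp₀)
      exact ⟨toLex ⟨k, z⟩⟩
    · intro p hp i j hij x y
      right; right
      obtain ⟨k, hk1, hk2, hk3⟩ := hgd p (Or.inl hp) i j hij
      obtain ⟨z, hz⟩ := hex k (by rw [hk3]; exact hp)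
      exact ⟨k, hk1, hk2, z, hz.trans hk3⟩
    · intro i x
      left
      obtain ⟨k, hk1, _, hk3⟩ := hgd p₀ (Or.inl hp₀) i (i + 1) (by linarith)
      obtain ⟨z, _⟩ := hex k (by rw [hk3]; exact hp₀)
      exact ⟨k, hk1, ⟨z⟩⟩
    · intro i x
      left
      obtain ⟨k, _, hk2, hk3⟩ := hgd p₀ (Or.inl hp₀) (i - 1) i (by linarith)
      obtain ⟨z, _⟩ := hex k (by rw [hk3]; exact hp₀)
      exact ⟨k, hk2, ⟨z⟩⟩
  have h2 : Iso t (prod fun p : Lex ((q : ℚ) × BT (tg q)) =>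
      BLab f (g (ofLex p).1) (g (ofLex p).1) (g (ofLex p).1) (tg (ofLex p).1)
        (ofLex p).2) :=
    iso_trans htg (iso_trans (prod_congr fun q => hiso q)
      (prod_prod fun q => BLab f (g q) (g q) (g q) (tg q)))
  exact iso_trans hsf (iso_trans (goodFam_prod_iso (goodFam_of_shuffle hfP hfd) hGt)
    (iso_symm h2))

end Uniq

------------------------------------------------------------------
-- associativity

def assocMap (u v w : CWord A) :
    (concat (concat u v) w).carrier → (concat u (concat v w)).carrier := fun p =>
  match ofLex p with
  | ⟨false, q⟩ =>
    match ofLex q with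
    | ⟨false, a⟩ => toLex ⟨false, a⟩
    | ⟨true, b⟩ => toLex ⟨true, toLex ⟨false, b⟩⟩
  | ⟨true, c⟩ => toLex ⟨true, toLex ⟨true, c⟩⟩

theorem iso_assoc (u v w : CWord A) :
    Iso (concat (concat u v) w) (concat u (concat v w)) := by
  refine ⟨StrictMono.orderIsoOfSurjective (assocMap u v w) ?_ ?_, ?_⟩
  · rintro ⟨bp, xp⟩ ⟨bq, xq⟩ h
    cases bp <;> cases bq
    · have h' := lex_lt_same h
      obtain ⟨bp', yp⟩ := xp
      obtain ⟨bq', yq⟩ := xq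
      cases bp' <;> cases bq'
      · exact lex_lt_right (lex_lt_same h')
      · exact lex_lt_left _ _ (by decide)
      · exact absurd (lex_fst_le h') (by decide)
      · exact lex_lt_right (lex_lt_right (lex_lt_same h'))
    · obtain ⟨bp', yp⟩ := xp
      cases bp'
      · exact lex_lt_left _ _ (by decide)
      · exact lex_lt_right (lex_lt_left _ _ (by decide))
    · exact absurd (lex_fst_le h) (by decide)
    · exact lex_lt_right (lex_lt_right (lex_lt_same h))
  · rintro ⟨bq, xq⟩
    cases bq
    · exact ⟨toLex ⟨false, toLex ⟨false, xq⟩⟩, rfl⟩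
    · obtain ⟨bq', yq⟩ := xq
      cases bq'
      · exact ⟨toLex ⟨false, toLex ⟨true, yq⟩⟩, rfl⟩
      · exact ⟨toLex ⟨true, yq⟩, rfl⟩
  · rintro ⟨bp, xp⟩
    cases bp
    · obtain ⟨bp', yp⟩ := xp
      cases bp' <;> rfl
    · rfl

------------------------------------------------------------------
-- (uv)^ω = u (vu)^ω

def a2Map (u v : CWord A) :
    (omegaPow (concat u v)).carrier → (concat u (omegaPow (concat v u))).carrier := fun p =>
  match ofLex p with
  | ⟨n, q⟩ =>
    match ofLex q with
    | ⟨false, a⟩ =>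
      match n with
      | 0 => toLex ⟨false, a⟩
      | Nat.succ m => toLex ⟨true, toLex ⟨m, toLex ⟨true, a⟩⟩⟩
    | ⟨true, b⟩ => toLex ⟨true, toLex ⟨n, toLex ⟨false, b⟩⟩⟩

theorem iso_omega_concat (u v : CWord A) :
    Iso (omegaPow (concat u v)) (concat u (omegaPow (concat v u))) := by
  refine ⟨StrictMono.orderIsoOfSurjective (a2Map u v) ?_ ?_, ?_⟩
  · rintro ⟨n, x⟩ ⟨n', x'⟩ h
    rcases lex_lt_iff'.1 h with hnn | ⟨e, hxx⟩
    · obtain ⟨bx, a⟩ := x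
      obtain ⟨bx', a'⟩ := x'
      cases bx <;> cases bx'
      · match n, n', hnn with
        | 0, Nat.succ m', _ => exact lex_lt_left _ _ (by decide)
        | Nat.succ m, Nat.succ m', hnn =>
          exact lex_lt_right (lex_lt_left _ _ (by omega))
      · match n, hnn with
        | 0, _ => exact lex_lt_left _ _ (by decide)
        | Nat.succ m, hnn => exact lex_lt_right (lex_lt_left _ _ (by omega))
      · match n', hnn with
        | Nat.succ m', hnn =>
          rcases eq_or_lt_of_le (show n ≤ m' by omega) with rfl | hlt
          · exact lex_lt_right (lex_lt_right (lex_lt_left _ _ (by decide)))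
          · exact lex_lt_right (lex_lt_left _ _ hlt)
      · exact lex_lt_right (lex_lt_left _ _ hnn)
    · subst e
      obtain ⟨bx, a⟩ := x
      obtain ⟨bx', a'⟩ := x'
      cases bx <;> cases bx'
      · have h' := lex_lt_same hxx
        match n with
        | 0 => exact lex_lt_right h'
        | Nat.succ m => exact lex_lt_right (lex_lt_right (lex_lt_right h'))
      · match n with
        | 0 => exact lex_lt_left _ _ (by decide)
        | Nat.succ m => exact lex_lt_right (lex_lt_left _ _ (by omega))
      · exact absurd (lex_fst_le hxx) (by decide)
      · exact lex_lt_right (lex_lt_right (lex_lt_right (lex_lt_same hxx)))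
  · rintro ⟨bq, xq⟩
    cases bq
    · exact ⟨toLex ⟨0, toLex ⟨false, xq⟩⟩, rfl⟩
    · obtain ⟨m, y⟩ := xq
      obtain ⟨by', z⟩ := y
      cases by'
      · exact ⟨toLex ⟨m, toLex ⟨true, z⟩⟩, rfl⟩
      · exact ⟨toLex ⟨m + 1, toLex ⟨false, z⟩⟩, rfl⟩
  · rintro ⟨n, x⟩
    obtain ⟨bx, a⟩ := x
    cases bx
    · match n with
      | 0 => rfl
      | Nat.succ m => rfl
    · rfl

------------------------------------------------------------------
-- (vu)^ω* = (uv)^ω* u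

def a2sAux (u v : CWord A) :
    ℕ → (concat v u).carrier → (concat (omegaStarPow (concat u v)) u).carrier := fun n q =>
  match ofLex q with
  | ⟨false, b⟩ => toLex ⟨false, toLex ⟨OrderDual.toDual n, toLex ⟨true, b⟩⟩⟩
  | ⟨true, a⟩ =>
    match n with
    | 0 => toLex ⟨true, a⟩
    | Nat.succ m => toLex ⟨false, toLex ⟨OrderDual.toDual m, toLex ⟨false, a⟩⟩⟩

theorem a2sAux_lt1 (u v : CWord A) (m m' : ℕ) (x : (concat v u).carrier)
    (x' : (concat v u).carrier) (hmm : m' < m) : a2sAux u v m x < a2sAux u v m' x' := by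
  obtain ⟨bx, a⟩ := x
  obtain ⟨bx', a'⟩ := x'
  cases bx <;> cases bx'
  · exact lex_lt_right (lex_lt_left _ _ (OrderDual.toDual_lt_toDual.2 hmm))
  · match m', hmm with
    | 0, _ => exact lex_lt_left _ _ (by decide)
    | Nat.succ m'', hmm =>
      exact lex_lt_right (lex_lt_left _ _ (OrderDual.toDual_lt_toDual.2 (by omega)))
  · match m, hmm with
    | Nat.succ k, hmm =>
      rcases eq_or_lt_of_le (show m' ≤ k by omega) with rfl | hlt
      · exact lex_lt_right (lex_lt_right (lex_lt_left _ _ (by decide)))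
      · exact lex_lt_right (lex_lt_left _ _ (OrderDual.toDual_lt_toDual.2 hlt))
  · match m, hmm with
    | Nat.succ k, hmm =>
      match m', hmm with
      | 0, _ => exact lex_lt_left _ _ (by decide)
      | Nat.succ k', hmm =>
        exact lex_lt_right (lex_lt_left _ _ (OrderDual.toDual_lt_toDual.2 (by omega)))

theorem a2sAux_lt2 (u v : CWord A) (m : ℕ) (x x' : (concat v u).carrier)
    (hxx : x < x') : a2sAux u v m x < a2sAux u v m x' := by
  obtain ⟨bx, a⟩ := x
  obtain ⟨bx', a'⟩ := x'
  cases bx <;> cases bx'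
  · exact lex_lt_right (lex_lt_right (lex_lt_right (lex_lt_same hxx)))
  · match m with
    | 0 => exact lex_lt_left _ _ (by decide)
    | Nat.succ k =>
      exact lex_lt_right (lex_lt_left _ _ (OrderDual.toDual_lt_toDual.2 (by omega)))
  · exact absurd (lex_fst_le hxx) (by decide)
  · have h' := lex_lt_same hxx
    match m with
    | 0 => exact lex_lt_right h'
    | Nat.succ k => exact lex_lt_right (lex_lt_right (lex_lt_right h'))

theorem iso_omegaStar_concat (u v : CWord A) :
    Iso (omegaStarPow (concat v u)) (concat (omegaStarPow (concat u v)) u) := by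
  refine ⟨StrictMono.orderIsoOfSurjective
    (fun p : (omegaStarPow (concat v u)).carrier =>
      a2sAux u v (OrderDual.ofDual (ofLex p).1) (ofLex p).2) ?_ ?_, ?_⟩
  · rintro ⟨n, x⟩ ⟨n', x'⟩ h
    rcases lex_lt_iff'.1 h with hnn | ⟨e, hxx⟩
    · exact a2sAux_lt1 u v _ _ x x' hnn
    · subst e
      exact a2sAux_lt2 u v _ x x' hxx
  · rintro ⟨bq, xq⟩
    cases bq
    · obtain ⟨n, y⟩ := xq
      obtain ⟨by', z⟩ := y
      cases by'
      · exact ⟨toLex ⟨OrderDual.toDual (OrderDual.ofDual n + 1), toLex ⟨true, z⟩⟩, rfl⟩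
      · exact ⟨toLex ⟨n, toLex ⟨false, z⟩⟩, rfl⟩
    · exact ⟨toLex ⟨OrderDual.toDual 0, toLex ⟨true, xq⟩⟩, rfl⟩
  · rintro ⟨n, x⟩
    obtain ⟨bx, a⟩ := x
    cases bx
    · rfl
    · show (concat (omegaStarPow (concat u v)) u).label
        (a2sAux u v (OrderDual.ofDual n) (toLex ⟨true, a⟩)) = u.label a
      generalize OrderDual.ofDual n = m
      match m with
      | 0 => rfl
      | Nat.succ k => rfl

------------------------------------------------------------------
-- powers

theorem iso_omegaPow_nPow (u : CWord A) (n : ℕ) :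
    Iso (omegaPow (nPowSucc u n)) (omegaPow u) := by
  have e : Lex ((_ : ℕ) × Fin (n + 1)) ≃o ℕ := by
    refine StrictMono.orderIsoOfSurjective
      (fun p => (ofLex p).1 * (n + 1) + ((ofLex p).2 : ℕ)) ?_ ?_
    · rintro ⟨k, i⟩ ⟨k', i'⟩ h
      rcases lex_lt_iff'.1 h with hkk | ⟨e', hii⟩
      · have h1 : k + 1 ≤ k' := hkk
        have h2 : (i : ℕ) < n + 1 := i.isLt
        calc k * (n + 1) + (i : ℕ) < k * (n + 1) + (n + 1) := Nat.add_lt_add_left h2 _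
          _ = (k + 1) * (n + 1) := by ring
          _ ≤ k' * (n + 1) := Nat.mul_le_mul_right _ h1
          _ ≤ k' * (n + 1) + (i' : ℕ) := Nat.le_add_right _ _
      · subst e'
        have h1 : (i : ℕ) < (i' : ℕ) := hii
        exact Nat.add_lt_add_left h1 _
    · intro m
      exact ⟨toLex ⟨m / (n + 1), ⟨m % (n + 1), Nat.mod_lt _ (Nat.succ_pos n)⟩⟩,
        Nat.div_add_mod' m (n + 1)⟩
  exact iso_trans (prod_prod fun (_ : ℕ) (_ : Fin (n + 1)) => u)
    (prod_iso e fun _ => iso_refl u)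

theorem iso_omegaStarPow_nPow (u : CWord A) (n : ℕ) :
    Iso (omegaStarPow (nPowSucc u n)) (omegaStarPow u) := by
  have e : Lex ((_ : ℕᵒᵈ) × Fin (n + 1)) ≃o ℕᵒᵈ := by
    refine StrictMono.orderIsoOfSurjective
      (fun p => OrderDual.toDual
        (OrderDual.ofDual (ofLex p).1 * (n + 1) + (n - ((ofLex p).2 : ℕ)))) ?_ ?_
    · rintro ⟨k, i⟩ ⟨k', i'⟩ h
      rcases lex_lt_iff'.1 h with hkk | ⟨e', hii⟩
      · refine OrderDual.toDual_lt_toDual.2 ?_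
        have h1 : OrderDual.ofDual k' + 1 ≤ OrderDual.ofDual k := hkk
        calc OrderDual.ofDual k' * (n + 1) + (n - (i' : ℕ))
            ≤ OrderDual.ofDual k' * (n + 1) + n := Nat.add_le_add_left (Nat.sub_le _ _) _
          _ < OrderDual.ofDual k' * (n + 1) + (n + 1) :=
              Nat.add_lt_add_left (Nat.lt_succ_self n) _
          _ = (OrderDual.ofDual k' + 1) * (n + 1) := by ring
          _ ≤ OrderDual.ofDual k * (n + 1) := Nat.mul_le_mul_right _ h1
          _ ≤ OrderDual.ofDual k * (n + 1) + (n - (i : ℕ)) := Nat.le_add_right _ _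
      · subst e'
        refine OrderDual.toDual_lt_toDual.2 ?_
        have h1 : (i : ℕ) < (i' : ℕ) := hii
        have h2 : (i' : ℕ) < n + 1 := i'.isLt
        show OrderDual.ofDual k * (n + 1) + (n - (i' : ℕ)) <
          OrderDual.ofDual k * (n + 1) + (n - (i : ℕ))
        exact Nat.add_lt_add_left (by omega) _
    · intro m
      refine ⟨toLex ⟨OrderDual.toDual (OrderDual.ofDual m / (n + 1)),
        ⟨n - OrderDual.ofDual m % (n + 1), Nat.lt_succ_of_le (Nat.sub_le _ _)⟩⟩, ?_⟩
      have h1 : OrderDual.ofDual m % (n + 1) ≤ n := by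
        have h2 : OrderDual.ofDual m % (n + 1) < n + 1 :=
          Nat.mod_lt _ (Nat.succ_pos n)
        omega
      show OrderDual.toDual (OrderDual.ofDual m / (n + 1) * (n + 1) +
        (n - (n - OrderDual.ofDual m % (n + 1)))) = m
      rw [Nat.sub_sub_self h1]
      exact congrArg OrderDual.toDual (Nat.div_add_mod' _ _)
  exact iso_trans (prod_prod fun (_ : ℕᵒᵈ) (_ : Fin (n + 1)) => u)
    (prod_iso e fun _ => iso_refl u)

------------------------------------------------------------------
-- epsilon laws

theorem iso_concat_eps (x : CWord A) : Iso (concat x epsilon) x := by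
  refine ⟨StrictMono.orderIsoOfSurjective
    (fun p : (concat x epsilon).carrier =>
      match ofLex p with
      | ⟨false, c⟩ => c
      | ⟨true, c⟩ => Fin.elim0 c) ?_ ?_, ?_⟩
  · rintro ⟨bp, c⟩ ⟨bq, c'⟩ h
    cases bp <;> cases bq
    · exact lex_lt_same h
    · exact Fin.elim0 c'
    · exact Fin.elim0 c
    · exact Fin.elim0 c
  · intro c
    exact ⟨toLex ⟨false, c⟩, rfl⟩
  · rintro ⟨bp, c⟩
    cases bp
    · rfl
    · exact Fin.elim0 c

theorem iso_eps_concat (x : CWord A) : Iso (concat epsilon x) x := by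
  refine ⟨StrictMono.orderIsoOfSurjective
    (fun p : (concat epsilon x).carrier =>
      match ofLex p with
      | ⟨false, c⟩ => Fin.elim0 c
      | ⟨true, c⟩ => c) ?_ ?_, ?_⟩
  · rintro ⟨bp, c⟩ ⟨bq, c'⟩ h
    cases bp <;> cases bq
    · exact Fin.elim0 c
    · exact Fin.elim0 c
    · exact Fin.elim0 c'
    · exact lex_lt_same h
  · intro c
    exact ⟨toLex ⟨true, c⟩, rfl⟩
  · rintro ⟨bp, c⟩
    cases bp
    · exact Fin.elim0 c
    · rfl

theorem iso_omegaPow_eps : Iso (omegaPow (epsilon (A := A))) epsilon :=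
  iso_of_isEmpty ⟨fun p => Fin.elim0 (ofLex p).2⟩ (inferInstanceAs (IsEmpty (Fin 0)))

theorem iso_omegaStarPow_eps : Iso (omegaStarPow (epsilon (A := A))) epsilon :=
  iso_of_isEmpty ⟨fun p => Fin.elim0 (ofLex p).2⟩ (inferInstanceAs (IsEmpty (Fin 0)))

theorem iso_shuffle_single_eps (w : CWord A) (h : IsShuffleOfWords {epsilon} w) :
    Iso w epsilon := by
  obtain ⟨g, hgmem, _, hwg⟩ := h
  refine iso_trans hwg (iso_of_isEmpty ⟨fun p => ?_⟩ (inferInstanceAs (IsEmpty (Fin 0))))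
  have h' : g (ofLex p).1 = epsilon := hgmem (ofLex p).1
  exact Fin.elim0 (cast (congrArg CWord.carrier h') (ofLex p).2)

end CWord

namespace CWord

variable {A : Type}

theorem A4full (P : Set (CWord A)) (hPne : P.Nonempty) (s : CWord A)
    (hsh : IsShuffleOfWords P s) (c : CWord A) (hc : c ∈ P)
    (P' : Set (CWord A)) (hP' : P' ⊆ P) (P'' : Set (CWord A)) (hP''ne : P''.Nonempty)
    (hP''sub : P'' ⊆ {x | x = s ∨ (∃ a ∈ P, x = concat a s) ∨ (∃ b ∈ P, x = concat s b) ∨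
        (∃ a ∈ P, ∃ b ∈ P, x = concat (concat a s) b)}) :
    Iso s (concat s s) ∧ Iso s (concat s (concat c s)) ∧
      Iso s (omegaPow s) ∧ Iso s (omegaPow (concat s c)) ∧
      Iso s (omegaStarPow s) ∧ Iso s (omegaStarPow (concat c s)) ∧
      ∀ t : CWord A, IsShuffleOfWords (P' ∪ P'') t → Iso s t := by
  obtain ⟨f, hfP, hfd, hsf⟩ := hsh
  exact ⟨iso_s_ss hfP hfd hsf, iso_s_scs hfP hfd hsf hc, iso_s_omega hfP hfd hsf,
    iso_s_omega_sc hfP hfd hsf hc, iso_s_omegaStar hfP hfd hsf,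
    iso_s_omegaStar_cs hfP hfd hsf hc,
    fun t ht => iso_shuffle_union hfP hfd hsf hPne hP' hP''ne hP''sub ht⟩

end CWord

open CWord in
/-- the countable words over `A` satisfy the ⊕-algebra axioms
(A1)–(A4) (for nonempty words) and, together with the empty word `ε`,
the ◦-algebra axiom (A5) as well, with equality of words meaning isomorphism:
`(A^⊕, ·, ω, ω*, η)` is a ⊕-algebra and `(A^◦, ε, ·, ω, ω*, η)` is a ◦-algebra. -/
theorem word_algebras_satisfy_axioms (A : Type) :
    -- `(A^⊕, ·, ω, ω*, η)` satisfies (A1)–(A4) up to isomorphism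
    ((∀ u v w : CWord A, Nonempty u.carrier → Nonempty v.carrier → Nonempty w.carrier →
        Iso (concat (concat u v) w) (concat u (concat v w))) ∧
      (∀ u v : CWord A, Nonempty u.carrier → Nonempty v.carrier →
        Iso (omegaPow (concat u v)) (concat u (omegaPow (concat v u)))) ∧
      (∀ u : CWord A, Nonempty u.carrier → ∀ n : ℕ,
        Iso (omegaPow (nPowSucc u n)) (omegaPow u)) ∧
      (∀ u v : CWord A, Nonempty u.carrier → Nonempty v.carrier →
        Iso (omegaStarPow (concat v u)) (concat (omegaStarPow (concat u v)) u)) ∧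
      (∀ u : CWord A, Nonempty u.carrier → ∀ n : ℕ,
        Iso (omegaStarPow (nPowSucc u n)) (omegaStarPow u)) ∧
      (∀ P : Set (CWord A), P.Finite → P.Nonempty → (∀ u ∈ P, Nonempty u.carrier) →
        ∀ s : CWord A, IsShuffleOfWords P s → ∀ c ∈ P, ∀ P' ⊆ P,
        ∀ P'' : Set (CWord A), P''.Nonempty →
        P'' ⊆ {x | x = s ∨ (∃ a ∈ P, x = concat a s) ∨ (∃ b ∈ P, x = concat s b) ∨
                   (∃ a ∈ P, ∃ b ∈ P, x = concat (concat a s) b)} →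
          Iso s (concat s s) ∧ Iso s (concat s (concat c s)) ∧
          Iso s (omegaPow s) ∧ Iso s (omegaPow (concat s c)) ∧
          Iso s (omegaStarPow s) ∧ Iso s (omegaStarPow (concat c s)) ∧
          ∀ t : CWord A, IsShuffleOfWords (P' ∪ P'') t → Iso s t)) ∧
    -- `(A^◦, ε, ·, ω, ω*, η)` satisfies (A1)–(A5) up to isomorphism
    ((∀ u v w : CWord A, Iso (concat (concat u v) w) (concat u (concat v w))) ∧
      (∀ u v : CWord A, Iso (omegaPow (concat u v)) (concat u (omegaPow (concat v u)))) ∧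
      (∀ (u : CWord A) (n : ℕ), Iso (omegaPow (nPowSucc u n)) (omegaPow u)) ∧
      (∀ u v : CWord A,
        Iso (omegaStarPow (concat v u)) (concat (omegaStarPow (concat u v)) u)) ∧
      (∀ (u : CWord A) (n : ℕ), Iso (omegaStarPow (nPowSucc u n)) (omegaStarPow u)) ∧
      (∀ P : Set (CWord A), P.Finite → P.Nonempty →
        ∀ s : CWord A, IsShuffleOfWords P s → ∀ c ∈ P, ∀ P' ⊆ P,
        ∀ P'' : Set (CWord A), P''.Nonempty →
        P'' ⊆ {x | x = s ∨ (∃ a ∈ P, x = concat a s) ∨ (∃ b ∈ P, x = concat s b) ∨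
                   (∃ a ∈ P, ∃ b ∈ P, x = concat (concat a s) b)} →
          Iso s (concat s s) ∧ Iso s (concat s (concat c s)) ∧
          Iso s (omegaPow s) ∧ Iso s (omegaPow (concat s c)) ∧
          Iso s (omegaStarPow s) ∧ Iso s (omegaStarPow (concat c s)) ∧
          ∀ t : CWord A, IsShuffleOfWords (P' ∪ P'') t → Iso s t) ∧
      -- (A5)
      (∀ x : CWord A, Iso (concat x epsilon) x) ∧
      (∀ x : CWord A, Iso (concat epsilon x) x) ∧
      Iso (omegaPow (epsilon (A := A))) epsilon ∧
      Iso (omegaStarPow (epsilon (A := A))) epsilon ∧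
      (∀ w : CWord A, IsShuffleOfWords {epsilon} w → Iso w epsilon) ∧
      (∀ P : Set (CWord A), P.Finite → P.Nonempty →
        ∀ s t : CWord A, IsShuffleOfWords P s → IsShuffleOfWords (P ∪ {epsilon}) t →
          Iso s t)) := by
  constructor
  · exact ⟨fun u v w _ _ _ => iso_assoc u v w,
      fun u v _ _ => iso_omega_concat u v,
      fun u _ n => iso_omegaPow_nPow u n,
      fun u v _ _ => iso_omegaStar_concat u v,
      fun u _ n => iso_omegaStarPow_nPow u n,
      fun P _ hPne _ s hsh c hc P' hP' P'' hP''ne hP''sub =>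
        A4full P hPne s hsh c hc P' hP' P'' hP''ne hP''sub⟩
  · refine ⟨fun u v w => iso_assoc u v w,
      fun u v => iso_omega_concat u v,
      fun u n => iso_omegaPow_nPow u n,
      fun u v => iso_omegaStar_concat u v,
      fun u n => iso_omegaStarPow_nPow u n,
      fun P _ hPne s hsh c hc P' hP' P'' hP''ne hP''sub =>
        A4full P hPne s hsh c hc P' hP' P'' hP''ne hP''sub,
      fun x => iso_concat_eps x,
      fun x => iso_eps_concat x,
      iso_omegaPow_eps, iso_omegaStarPow_eps,
      fun w hw => iso_shuffle_single_eps w hw,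
      fun P _ hPne s t hs ht => ?_⟩
    obtain ⟨f, hfP, hfd, hsf⟩ := hs
    exact iso_shuffle_eps hfP hfd hsf hPne ht
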